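/- Let R be a commutative ring and let a, p, q, x0, x1, x2, x3 ∈ R. The determinant of the 4×4 matrix with rows (x0, a·x1, p·x2 − a·q·x3, a·q·x2 − a·p·x3), (x1, x0, q·x2 − p·x3, p·x2 − a·q·x3), (x2, a·x3, x0, −a·x1), (x3, x2, −x1, x0) equals ((x0² − a·x1²) − p·(x2² − a·x3²))² − a·q²·(x2² − a·x3²)². -/

import Mathlib

/-- Determinant of the left regular representation matrix of
`x0 + x1·i + x2·j − x3·ij` in the nonassociative quaternion algebra
`Cay(F(√a), p + q√a)` with respect to the basis `{1, i, j, −ij}`: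
it equals `((x0² − a·x1²) − p·(x2² − a·x3²))² − a·q²·(x2² − a·x3²)²`. -/
theorem cay_four_by_four_det {R : Type*} [CommRing R] (a p q x0 x1 x2 x3 : R) :
    (!![x0, a * x1, p * x2 - a * q * x3, a * q * x2 - a * p * x3;
        x1, x0, q * x2 - p * x3, p * x2 - a * q * x3;
        x2, a * x3, x0, -(a * x1);
        x3, x2, -x1, x0]).det =
      ((x0 ^ 2 - a * x1 ^ 2) - p * (x2 ^ 2 - a * x3 ^ 2)) ^ 2 -
        a * q ^ 2 * (x2 ^ 2 - a * x3 ^ 2) ^ 2 := by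
  simp [Matrix.det_succ_row_zero, Fin.sum_univ_succ, Fin.succAbove]; ring
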